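/- Let f : [0,1] → ℝ be monotone (or of bounded variation with total variation V) and let x_1, …, x_n be a stratified sample with x_ℓ ∼ U[(ℓ−1)/n, ℓ/n] independent. Then Var((1/n)∑_ℓ f(x_ℓ)) ≤ V²/n², where V is the total variation of f on [0,1]. -/

import Mathlib

open MeasureTheory ProbabilityTheory

private lemma my_variance_congr {Ω : Type*} {m : MeasurableSpace Ω} {μ : Measure Ω}
    {X Y : Ω → ℝ} (h : X =ᵐ[μ] Y) : variance X μ = variance Y μ := by
  unfold ProbabilityTheory.variance ProbabilityTheory.evariance
  rw [integral_congr_ae h]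
  congr 1
  apply lintegral_congr_ae
  filter_upwards [h] with ω hω
  rw [hω]

/-- For `f` of bounded variation on `[0,1]` with total variation `V`
(e.g. `f` monotone) and a one-per-stratum stratified sample `x_ℓ ∼ U[(ℓ−1)/n, ℓ/n]`
independent, `Var((1/n)∑_ℓ f(x_ℓ)) ≤ V²/n²`. -/
theorem stratified_variance_le_variation_sq
    {Ω : Type*} [MeasureSpace Ω] [IsProbabilityMeasure (ℙ : Measure Ω)]
    (n : ℕ) (hn : 0 < n) (X : Fin n → Ω → ℝ)
    (hmeas : ∀ ℓ, Measurable (X ℓ))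
    (hindep : iIndepFun X ℙ)
    (hunif : ∀ ℓ : Fin n, pdf.IsUniform (X ℓ)
      (Set.Icc ((ℓ : ℝ) / n) (((ℓ : ℝ) + 1) / n)) ℙ volume)
    (f : ℝ → ℝ) (hf : MonotoneOn f (Set.Icc (0:ℝ) 1))
    (V : ℝ) (hV : eVariationOn f (Set.Icc (0:ℝ) 1) = ENNReal.ofReal V) :
    variance (fun ω => (1 / n : ℝ) * ∑ ℓ, f (X ℓ ω)) ℙ ≤ V^2 / (n:ℝ)^2 := by
  have hn' : (0:ℝ) < n := by exact_mod_cast hn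
  -- clamped version of f, monotone on all of ℝ
  set g : ℝ → ℝ := fun x => f (max 0 (min x 1)) with hg_def
  have hclamp_mem : ∀ x : ℝ, max 0 (min x 1) ∈ Set.Icc (0:ℝ) 1 := fun x =>
    ⟨le_max_left _ _, max_le zero_le_one (min_le_right _ _)⟩
  have hg_mono : Monotone g := fun x y hxy =>
    hf (hclamp_mem x) (hclamp_mem y) (max_le_max le_rfl (min_le_min hxy le_rfl))
  have hg_meas : Measurable g := hg_mono.measurable
  have hg_eq : ∀ x ∈ Set.Icc (0:ℝ) 1, g x = f x := by
    intro x hx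
    simp only [hg_def]
    rw [min_eq_left hx.2, max_eq_right hx.1]
  -- strata
  set l : Fin n → ℝ := fun ℓ => (ℓ : ℝ) / n with hl_def
  set r : Fin n → ℝ := fun ℓ => ((ℓ : ℝ) + 1) / n with hr_def
  have hlr : ∀ ℓ, l ℓ < r ℓ := by
    intro ℓ
    simp only [hl_def, hr_def]
    rw [div_lt_div_iff₀ hn' hn']
    nlinarith
  have hsub : ∀ ℓ, Set.Icc (l ℓ) (r ℓ) ⊆ Set.Icc (0:ℝ) 1 := by
    intro ℓ
    apply Set.Icc_subset_Icc
    · exact div_nonneg (Nat.cast_nonneg _) hn'.le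
    · rw [div_le_one hn']
      have : (ℓ : ℕ) + 1 ≤ n := ℓ.isLt
      exact_mod_cast this
  -- stratum measure
  have hvol : ∀ ℓ, volume (Set.Icc (l ℓ) (r ℓ)) = ENNReal.ofReal (1 / n) := by
    intro ℓ
    rw [Real.volume_Icc]
    congr 1
    simp only [hl_def, hr_def]
    field_simp
    ring
  have hvol0 : ∀ ℓ, volume (Set.Icc (l ℓ) (r ℓ)) ≠ 0 := by
    intro ℓ
    rw [hvol ℓ]
    simp only [ne_eq, ENNReal.ofReal_eq_zero, not_le]
    positivity
  have hvolt : ∀ ℓ, volume (Set.Icc (l ℓ) (r ℓ)) ≠ ⊤ := fun ℓ => by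
    rw [hvol ℓ]; exact ENNReal.ofReal_ne_top
  -- a.e. membership in stratum
  have hmem : ∀ ℓ, ∀ᵐ ω ∂(ℙ : Measure Ω), X ℓ ω ∈ Set.Icc (l ℓ) (r ℓ) := by
    intro ℓ
    have h := (hunif ℓ).measure_preimage (hvol0 ℓ) (hvolt ℓ) (A := (Set.Icc (l ℓ) (r ℓ))ᶜ) measurableSet_Icc.compl
    rw [Set.inter_compl_self, measure_empty, ENNReal.zero_div] at h
    rw [ae_iff]
    exact h
  -- a.e. equality of the two averaged sums
  have haeq : (fun ω => (1 / n : ℝ) * ∑ ℓ, f (X ℓ ω))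
      =ᵐ[(ℙ : Measure Ω)] (fun ω => (1 / n : ℝ) * ∑ ℓ, g (X ℓ ω)) := by
    filter_upwards [ae_all_iff.2 hmem] with ω hω
    congr 1
    apply Finset.sum_congr rfl
    intro ℓ _
    exact (hg_eq _ (hsub ℓ (hω ℓ))).symm
  rw [my_variance_congr haeq]
  -- Memℒp of each g ∘ X ℓ
  have hbdd : ∀ ℓ, ∀ᵐ ω ∂(ℙ : Measure Ω), g (X ℓ ω) ∈ Set.Icc (g (l ℓ)) (g (r ℓ)) := by
    intro ℓ
    filter_upwards [hmem ℓ] with ω hω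
    exact ⟨hg_mono hω.1, hg_mono hω.2⟩
  have hMem : ∀ ℓ, MemLp (fun ω => g (X ℓ ω)) 2 (ℙ : Measure Ω) := fun ℓ =>
    memLp_of_bounded (hbdd ℓ) ((hg_meas.comp (hmeas ℓ)).aestronglyMeasurable) 2
  -- variance of sum
  have hindep' : iIndepFun (fun ℓ => g ∘ X ℓ) ℙ :=
    hindep.comp (fun _ => g) (fun _ => hg_meas)
  have hsum_var : variance (fun ω => ∑ ℓ, g (X ℓ ω)) ℙ
      = ∑ ℓ, variance (fun ω => g (X ℓ ω)) ℙ := by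
    have h := IndepFun.variance_sum (μ := (ℙ : Measure Ω)) (X := fun ℓ ω => g (X ℓ ω))
      (s := Finset.univ) (fun ℓ _ => hMem ℓ)
      (fun i _ j _ hij => hindep'.indepFun hij)
    rw [← h]
    congr 1
    ext ω
    simp
  -- per-stratum variance bound
  have hvar_le : ∀ ℓ, variance (fun ω => g (X ℓ ω)) ℙ ≤ (g (r ℓ) - g (l ℓ))^2 := by
    intro ℓ
    have h := variance_le_sq_of_bounded (hbdd ℓ) ((hg_meas.comp (hmeas ℓ)).aemeasurable)
    refine h.trans ?_
    have hge : 0 ≤ g (r ℓ) - g (l ℓ) := sub_nonneg.2 (hg_mono (hlr ℓ).le)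
    nlinarith [sq_nonneg (g (r ℓ) - g (l ℓ))]
  -- telescoping sum bound
  have htel : ∑ ℓ : Fin n, (g (r ℓ) - g (l ℓ)) = f 1 - f 0 := by
    have h1 : ∀ ℓ : Fin n, g (r ℓ) - g (l ℓ)
        = g ((↑(ℓ.val + 1) : ℝ) / n) - g ((↑ℓ.val : ℝ) / n) := by
      intro ℓ; push_cast; rfl
    rw [Finset.sum_congr rfl (fun ℓ _ => h1 ℓ)]
    rw [Fin.sum_univ_eq_sum_range (fun i => g ((↑(i + 1) : ℝ) / n) - g ((↑i : ℝ) / n))]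
    rw [Finset.sum_range_sub (fun i => g ((↑i : ℝ) / n))]
    have hnn : ((n:ℝ)) / n = 1 := div_self hn'.ne'
    rw [hnn]
    norm_num
    rw [hg_eq 1 (Set.mem_Icc.mpr ⟨zero_le_one, le_refl 1⟩), hg_eq 0 (Set.mem_Icc.mpr ⟨le_refl 0, zero_le_one⟩)]
  -- f 1 - f 0 bounded by |V|
  have hd0 : 0 ≤ f 1 - f 0 :=
    sub_nonneg.2 (hf (Set.mem_Icc.mpr ⟨le_refl 0, zero_le_one⟩) (Set.mem_Icc.mpr ⟨zero_le_one, le_refl 1⟩) zero_le_one)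
  have hdV : f 1 - f 0 ≤ |V| := by
    have h := eVariationOn.edist_le f (x := (0:ℝ)) (y := 1)
      (Set.mem_Icc.mpr ⟨le_refl 0, zero_le_one⟩) (Set.mem_Icc.mpr ⟨zero_le_one, le_refl 1⟩)
    rw [hV] at h
    have h2 : edist (f 0) (f 1) = ENNReal.ofReal (f 1 - f 0) := by
      rw [edist_dist, Real.dist_eq, abs_sub_comm, abs_of_nonneg hd0]
    rw [h2] at h
    have h3 : f 1 - f 0 ≤ max V 0 := by
      have := ENNReal.toReal_mono ENNReal.ofReal_ne_top h
      rwa [ENNReal.toReal_ofReal hd0, ENNReal.toReal_ofReal'] at this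
    exact h3.trans (max_le (le_abs_self V) (abs_nonneg V))
  -- sum of squares bound
  have hsq_sum : ∑ ℓ : Fin n, (g (r ℓ) - g (l ℓ))^2 ≤ V^2 := by
    set a : Fin n → ℝ := fun ℓ => g (r ℓ) - g (l ℓ) with ha_def
    have hae : ∀ ℓ, 0 ≤ a ℓ := fun ℓ => sub_nonneg.2 (hg_mono (hlr ℓ).le)
    have hTle : ∀ ℓ : Fin n, a ℓ ≤ ∑ j, a j := fun ℓ =>
      Finset.single_le_sum (fun j _ => hae j) (Finset.mem_univ ℓ)
    have step1 : ∑ ℓ : Fin n, (a ℓ)^2 ≤ (∑ ℓ, a ℓ)^2 := by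
      calc ∑ ℓ : Fin n, (a ℓ)^2 ≤ ∑ ℓ : Fin n, a ℓ * (∑ j, a j) := by
            apply Finset.sum_le_sum
            intro ℓ _
            rw [sq]
            exact mul_le_mul_of_nonneg_left (hTle ℓ) (hae ℓ)
        _ = (∑ ℓ, a ℓ)^2 := by rw [← Finset.sum_mul, sq]
    refine step1.trans ?_
    rw [htel]
    calc (f 1 - f 0)^2 ≤ |V|^2 := by nlinarith [abs_nonneg V]
      _ = V^2 := sq_abs V
  -- put everything together
  have hmulvar : variance (fun ω => (1 / n : ℝ) * ∑ ℓ, g (X ℓ ω)) ℙ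
      = (1 / n : ℝ)^2 * variance (fun ω => ∑ ℓ, g (X ℓ ω)) ℙ :=
    variance_const_mul (1 / n : ℝ) _ _
  rw [hmulvar, hsum_var]
  have hfin : ∑ ℓ, variance (fun ω => g (X ℓ ω)) ℙ ≤ V^2 :=
    (Finset.sum_le_sum fun ℓ _ => hvar_le ℓ).trans hsq_sum
  calc (1 / n : ℝ)^2 * ∑ ℓ, variance (fun ω => g (X ℓ ω)) ℙ
      ≤ (1 / n : ℝ)^2 * V^2 := by
        apply mul_le_mul_of_nonneg_left hfin (by positivity)
    _ = V^2 / (n:ℝ)^2 := by field_simp
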